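/- Let M be a nondeterministic finite automaton over an alphabet α with a finite state type σ. If the language L(M) accepted by M is a finite set and L(M) contains a word w of length n, then σ has at least n + 1 elements (i.e., Fintype.card σ ≥ n + 1). -/

import Mathlib

section Aux

variable {α : Type*} {σ : Type*} (M : NFA α σ)

private lemma nfa_stepSet_mono {S T : Set σ} (h : S ⊆ T) (a : α) :
    M.stepSet S a ⊆ M.stepSet T a := by
  intro s hs
  rw [NFA.mem_stepSet] at hs ⊢
  obtain ⟨t, ht, hst⟩ := hs
  exact ⟨t, h ht, hst⟩

private lemma nfa_evalFrom_mono {S T : Set σ} (h : S ⊆ T) (w : List α) :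
    M.evalFrom S w ⊆ M.evalFrom T w := by
  induction w generalizing S T with
  | nil => simpa using h
  | cons a w ih =>
    simpa [NFA.evalFrom] using ih (nfa_stepSet_mono M h a)

private lemma nfa_evalFrom_append (S : Set σ) (x y : List α) :
    M.evalFrom S (x ++ y) = M.evalFrom (M.evalFrom S x) y := by
  simp [NFA.evalFrom, List.foldl_append]

/-- Run extraction: membership in `evalFrom` yields a run of states. -/
private lemma nfa_exists_run {S : Set σ} :
    ∀ (w : List α) {s : σ}, s ∈ M.evalFrom S w →
      ∃ p : ℕ → σ, p 0 ∈ S ∧ p w.length = s ∧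
        ∀ i (hi : i < w.length), p (i + 1) ∈ M.step (p i) (w.get ⟨i, hi⟩) := by
  intro w
  induction w using List.reverseRecOn with
  | nil =>
    intro s hs
    rw [NFA.evalFrom_nil] at hs
    exact ⟨fun _ => s, hs, rfl, fun i hi => absurd hi (by simp)⟩
  | append_singleton w a ih =>
    intro s hs
    rw [NFA.evalFrom_append, NFA.evalFrom_singleton, NFA.mem_stepSet] at hs
    obtain ⟨t, ht, hst⟩ := hs
    obtain ⟨p, hp0, hpl, hps⟩ := ih ht
    refine ⟨fun i => if i ≤ w.length then p i else s, by simpa using hp0, by simp, ?_⟩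
    intro i hi
    have hi' : i < w.length + 1 := by simpa using hi
    rcases lt_or_eq_of_le (Nat.lt_succ_iff.mp hi') with h | h
    · have h1 : i ≤ w.length := h.le
      have h2 : i + 1 ≤ w.length := h
      have hget : (w ++ [a]).get ⟨i, hi⟩ = w.get ⟨i, h⟩ := by
        simp [List.getElem_append_left h]
      rw [hget]
      simpa [h1, h2] using hps i h
    · have h1 : i ≤ w.length := le_of_eq h
      have h2 : ¬ (i + 1 ≤ w.length) := by omega
      have hget : (w ++ [a]).get ⟨i, hi⟩ = a := by
        subst h; simp
      rw [hget]
      simp only [h1, h2, if_pos, if_neg, if_true, if_false]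
      rw [h, hpl]
      exact hst

/-- Segment lemma: a run goes from `p i` to `p (i + d)` reading the corresponding
segment of `w`. -/
private lemma nfa_run_segment {w : List α} {p : ℕ → σ}
    (hps : ∀ i (hi : i < w.length), p (i + 1) ∈ M.step (p i) (w.get ⟨i, hi⟩))
    (i : ℕ) : ∀ d : ℕ, i + d ≤ w.length →
      p (i + d) ∈ M.evalFrom {p i} ((w.drop i).take d) := by
  intro d
  induction d with
  | zero => intro _; simp
  | succ d ihd =>
    intro hle
    have hid : i + d < w.length := by omega
    have htake : (w.drop i).take (d + 1) = (w.drop i).take d ++ [w.get ⟨i + d, hid⟩] := by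
      rw [← List.take_concat_get' _ d (by simp; omega)]
      simp [List.getElem_drop]
    rw [htake, NFA.evalFrom_append, NFA.evalFrom_singleton, NFA.mem_stepSet]
    refine ⟨p (i + d), ihd (by omega), ?_⟩
    have := hps (i + d) hid
    simpa [← Nat.add_assoc] using this

/-- Pumping: if the run loops at `q` over `y`, then `q` reaches itself over `y^k`. -/
private lemma nfa_pump {q : σ} {y : List α} (hq : q ∈ M.evalFrom {q} y) :
    ∀ k : ℕ, q ∈ M.evalFrom {q} ((List.replicate k y).flatten) := by
  intro k
  induction k with
  | zero => simp
  | succ k ih =>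
    have : (List.replicate (k + 1) y).flatten = y ++ (List.replicate k y).flatten := by
      simp [List.replicate_succ]
    rw [this, nfa_evalFrom_append]
    exact nfa_evalFrom_mono M (Set.singleton_subset_iff.mpr hq) _ ih

end Aux

/-- If an NFA with a finite state type accepts a finite language and accepts a word of
length `n`, then it has at least `n + 1` states. -/
theorem nfa_finite_language_state_lower_bound
    {α : Type*} {σ : Type*} [Fintype σ] (M : NFA α σ)
    (hfin : Set.Finite (M.accepts : Set (List α)))
    (w : List α) (n : ℕ) (hw : w ∈ M.accepts) (hn : w.length = n) :
    n + 1 ≤ Fintype.card σ := by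
  subst hn
  set n := w.length with hn
  by_contra hlt
  push_neg at hlt
  rw [NFA.mem_accepts] at hw
  obtain ⟨f, hf, hfe⟩ := hw
  obtain ⟨p, hp0, hpl, hps⟩ := nfa_exists_run M w hfe
  -- pigeonhole: the run has a repeated state
  have hninj : ¬ Function.Injective (fun i : Fin (n + 1) => p i.val) := by
    intro hinj
    have := Fintype.card_le_of_injective _ hinj
    simp at this
    omega
  rw [Function.not_injective_iff] at hninj
  obtain ⟨i, j, hpij, hij⟩ := hninj
  -- wlog i < j
  wlog hlt' : (i : ℕ) < (j : ℕ) generalizing i j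
  · exact this j i hpij.symm hij.symm (by omega)
  set x := w.take i with hx
  set y := (w.drop i).take (j - i) with hy
  set z := w.drop j with hz
  have hin : (i : ℕ) ≤ n := by omega
  have hjn : (j : ℕ) ≤ n := by omega
  -- facts about the run
  have h1 : p i ∈ M.evalFrom M.start x := by
    have := nfa_run_segment M hps 0 i (by omega)
    simp only [Nat.zero_add, List.drop_zero] at this
    exact nfa_evalFrom_mono M (Set.singleton_subset_iff.mpr hp0) x this
  have h2 : p i ∈ M.evalFrom {p i} y := by
    have := nfa_run_segment M hps i (j - i) (by omega)
    rw [show (i : ℕ) + ((j : ℕ) - (i : ℕ)) = j by omega] at this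
    rw [hpij] at this ⊢
    exact this
  have h3 : f ∈ M.evalFrom {p i} z := by
    have := nfa_run_segment M hps j (n - j) (by omega)
    rw [show (j : ℕ) + ((n : ℕ) - (j : ℕ)) = n by omega, hpl] at this
    have hzeq : (w.drop j).take (n - j) = w.drop j := by
      apply List.take_of_length_le
      simp [hn]
    rw [hzeq] at this
    rw [hpij]
    exact this
  -- the pumped words are all accepted
  have haccept : ∀ k : ℕ, x ++ (List.replicate k y).flatten ++ z ∈ M.accepts := by
    intro k
    rw [NFA.mem_accepts]
    refine ⟨f, hf, ?_⟩
    rw [nfa_evalFrom_append, nfa_evalFrom_append]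
    have hk : p i ∈ M.evalFrom {p i} ((List.replicate k y).flatten) := nfa_pump M h2 k
    have s1 : M.evalFrom {p i} ((List.replicate k y).flatten) ⊆
        M.evalFrom (M.evalFrom M.start x) ((List.replicate k y).flatten) :=
      nfa_evalFrom_mono M (Set.singleton_subset_iff.mpr h1) _
    exact nfa_evalFrom_mono M (Set.singleton_subset_iff.mpr (s1 hk)) z h3
  -- infinitely many accepted words: contradiction
  have hylen : 0 < y.length := by
    rw [hy]
    simp [hn]
    omega
  have hinj : Function.Injective (fun k : ℕ => x ++ (List.replicate k y).flatten ++ z) := by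
    intro k₁ k₂ he
    have hlen : (x ++ (List.replicate k₁ y).flatten ++ z).length =
        (x ++ (List.replicate k₂ y).flatten ++ z).length := congrArg List.length he
    simp only [List.length_append, List.length_flatten, List.map_replicate,
      List.sum_replicate, smul_eq_mul, Nat.add_left_cancel_iff,
      Nat.add_right_cancel_iff] at hlen
    exact Nat.eq_of_mul_eq_mul_right hylen hlen
  exact (Set.infinite_of_injective_forall_mem hinj haccept) hfin
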